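/- For all integers n ≥ 0, d_3(2n+1) ≡ 0 (mod 2). -/

import Mathlib

open PowerSeries Finset

lemma coeff_sq_odd (f : PowerSeries (ZMod 2)) {m : ℕ} (hm : Odd m) :
    PowerSeries.coeff (R := ZMod 2) m (f ^ 2) = 0 := by
  rw [sq, PowerSeries.coeff_mul]
  refine Finset.sum_involution (fun p _ => Prod.swap p) ?_ ?_ ?_ ?_
  · intro a _
    rw [Prod.fst_swap, Prod.snd_swap, mul_comm]
    exact CharTwo.add_self_eq_zero _
  · intro a ha _
    intro h
    have h1 : a.2 = a.1 := congrArg Prod.fst h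
    rw [Finset.HasAntidiagonal.mem_antidiagonal] at ha
    rw [h1] at ha
    rcases hm with ⟨t, ht⟩
    omega
  · intro a ha
    rw [Finset.HasAntidiagonal.mem_antidiagonal] at ha ⊢
    simpa [add_comm] using ha
  · intro a _
    rfl

/-- `elongatedDiamond k n` (written `d_k(n)` in the paper) is the coefficient of `q^n` in the
formal power series `∏_{i ≥ 1} (1 - q^(2i))^k / ∏_{i ≥ 1} (1 - q^i)^(3k+1)`.
Since every factor with index `i > n` is congruent to `1` modulo `q^(n+1)`, this coefficient
equals the coefficient of `q^n` in the finite product over `1 ≤ i ≤ n`. -/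
noncomputable def elongatedDiamond (k n : ℕ) : ℤ :=
  PowerSeries.coeff (R := ℤ) n
    (∏ i ∈ Finset.Icc 1 n,
      ((1 - (PowerSeries.X : PowerSeries ℤ) ^ (2 * i)) ^ k *
        (PowerSeries.invOfUnit (1 - (PowerSeries.X : PowerSeries ℤ) ^ i) 1) ^ (3 * k + 1)))

theorem d3_mod2 (n : ℕ) : (2 : ℤ) ∣ elongatedDiamond 3 (2 * n + 1) := by
  suffices h0 : ((elongatedDiamond 3 (2 * n + 1) : ℤ) : ZMod 2) = 0 by
    exact_mod_cast (ZMod.intCast_zmod_eq_zero_iff_dvd _ 2).mp h0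
  set N := 2 * n + 1 with hN
  set φ := Int.castRingHom (ZMod 2) with hφ
  -- the image of the coefficient is the coefficient of the mapped series
  have hmap : ((elongatedDiamond 3 N : ℤ) : ZMod 2) =
      PowerSeries.coeff (R := ZMod 2) N (PowerSeries.map φ
        (∏ i ∈ Finset.Icc 1 N,
          ((1 - (PowerSeries.X : PowerSeries ℤ) ^ (2 * i)) ^ 3 *
            (PowerSeries.invOfUnit (1 - (PowerSeries.X : PowerSeries ℤ) ^ i) 1) ^ (3 * 3 + 1)))) := by
    rw [PowerSeries.coeff_map]
    rfl
  rw [hmap]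
  set v : ℕ → PowerSeries (ZMod 2) :=
    fun i => PowerSeries.map φ (PowerSeries.invOfUnit (1 - (PowerSeries.X : PowerSeries ℤ) ^ i) 1)
    with hv
  have hinv : ∀ i ∈ Finset.Icc 1 N, (1 - (PowerSeries.X : PowerSeries (ZMod 2)) ^ i) * v i = 1 := by
    intro i hi
    rw [Finset.mem_Icc] at hi
    have hc : PowerSeries.constantCoeff (R := ℤ) (1 - (PowerSeries.X : PowerSeries ℤ) ^ i)
        = ((1 : ℤˣ) : ℤ) := by
      have : i ≠ 0 := by omega
      simp [PowerSeries.constantCoeff_X, zero_pow this]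
    have h1 : (1 - (PowerSeries.X : PowerSeries ℤ) ^ i) *
        PowerSeries.invOfUnit (1 - (PowerSeries.X : PowerSeries ℤ) ^ i) 1 = 1 :=
      PowerSeries.mul_invOfUnit _ _ hc
    have := congrArg (PowerSeries.map φ) h1
    simpa [hv] using this
  have hchar : (2 : PowerSeries (ZMod 2)) = 0 := by
    have h2 : (2 : PowerSeries (ZMod 2)) = PowerSeries.C (R := ZMod 2) 2 :=
      (map_ofNat (PowerSeries.C (R := ZMod 2)) 2).symm
    rw [h2, show (2 : ZMod 2) = 0 from rfl, map_zero]
  have hsq : ∀ i : ℕ, (1 - (PowerSeries.X : PowerSeries (ZMod 2)) ^ (2 * i))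
      = (1 - (PowerSeries.X : PowerSeries (ZMod 2)) ^ i) ^ 2 := by
    intro i
    have : (1 - (PowerSeries.X : PowerSeries (ZMod 2)) ^ i) ^ 2
        = 1 - 2 * (PowerSeries.X : PowerSeries (ZMod 2)) ^ i
          + 2 * (PowerSeries.X : PowerSeries (ZMod 2)) ^ (2 * i)
          - (PowerSeries.X : PowerSeries (ZMod 2)) ^ (2 * i) := by
      ring
    rw [this, hchar]
    ring
  -- rewrite the mapped product
  have hprod : PowerSeries.map φ
      (∏ i ∈ Finset.Icc 1 N,
        ((1 - (PowerSeries.X : PowerSeries ℤ) ^ (2 * i)) ^ 3 *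
          (PowerSeries.invOfUnit (1 - (PowerSeries.X : PowerSeries ℤ) ^ i) 1) ^ (3 * 3 + 1)))
      = (∏ i ∈ Finset.Icc 1 N, v i ^ 2) ^ 2 := by
    rw [map_prod, ← Finset.prod_pow]
    refine Finset.prod_congr rfl ?_
    intro i hi
    have h1 := hinv i hi
    have : PowerSeries.map φ
        ((1 - (PowerSeries.X : PowerSeries ℤ) ^ (2 * i)) ^ 3 *
          (PowerSeries.invOfUnit (1 - (PowerSeries.X : PowerSeries ℤ) ^ i) 1) ^ (3 * 3 + 1))
        = (1 - (PowerSeries.X : PowerSeries (ZMod 2)) ^ (2 * i)) ^ 3 * v i ^ 10 := by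
      simp [hv, map_mul, map_pow, map_sub, map_one, PowerSeries.map_X]
    rw [this, hsq i]
    calc ((1 - (PowerSeries.X : PowerSeries (ZMod 2)) ^ i) ^ 2) ^ 3 * v i ^ 10
        = ((1 - (PowerSeries.X : PowerSeries (ZMod 2)) ^ i) * v i) ^ 6 * v i ^ 4 := by ring
      _ = (v i ^ 2) ^ 2 := by rw [h1]; ring
  rw [hprod]
  exact coeff_sq_odd _ ⟨n, by omega⟩
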